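/- In a finite discounted MDP, let π and π' be policies, and define the surrogate L_π(π') = J(π) + (1/(1−γ)) E_{s∼d_π, a∼π'(·|s)}[A_π(s,a)]. If |A_π(s,a)| ≤ A_max and E_{s∼d_π}[D_TV(π'(·|s), π(·|s))] ≤ δ, then |J(π') − L_π(π')| ≤ (2γ/(1−γ)²) A_max δ. -/

import Mathlib

open scoped BigOperators

section MDP

variable {S A : Type*} [Fintype S] [Fintype A]

/-- `P` is a transition kernel: each `P s a` is a probability distribution on states. -/
def IsKernel (P : S → A → S → ℝ) : Prop :=
  (∀ s a s', 0 ≤ P s a s') ∧ ∀ s a, ∑ s', P s a s' = 1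

/-- `π` is a policy: each `π s` is a probability distribution on actions. -/
def IsPolicy (π : S → A → ℝ) : Prop :=
  (∀ s a, 0 ≤ π s a) ∧ ∀ s, ∑ a, π s a = 1

/-- `ρ` is a probability distribution on states. -/
def IsDist (ρ : S → ℝ) : Prop := (∀ s, 0 ≤ ρ s) ∧ ∑ s, ρ s = 1

/-- Total variation distance between finitely supported distributions. -/
noncomputable def dtv {X : Type*} [Fintype X] (p q : X → ℝ) : ℝ := (1 / 2) * ∑ x, |p x - q x|

/-- One-step state transition probability induced by policy `π`. -/
def stepKernel (P : S → A → S → ℝ) (π : S → A → ℝ) (s s' : S) : ℝ :=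
  ∑ a, π s a * P s a s'

/-- Distribution of the state after `t` steps starting from `s`, following `π`. -/
noncomputable def visit [DecidableEq S] (P : S → A → S → ℝ) (π : S → A → ℝ) : ℕ → S → S → ℝ
  | 0, s, s' => if s' = s then 1 else 0
  | (t + 1), s, s' => ∑ s'', visit P π t s s'' * stepKernel P π s'' s'

/-- Expected one-step reward of policy `π` at state `s`. -/
def rewardOf (r : S → A → ℝ) (π : S → A → ℝ) (s : S) : ℝ := ∑ a, π s a * r s a

/-- State value function `V_π`. -/
noncomputable def Vval [DecidableEq S] (P : S → A → S → ℝ) (r : S → A → ℝ) (γ : ℝ) (π : S → A → ℝ)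
    (s : S) : ℝ :=
  ∑' t : ℕ, γ ^ t * ∑ s', visit P π t s s' * rewardOf r π s'

/-- Action value function `Q_π`. -/
noncomputable def Qval [DecidableEq S] (P : S → A → S → ℝ) (r : S → A → ℝ) (γ : ℝ) (π : S → A → ℝ)
    (s : S) (a : A) : ℝ :=
  r s a + γ * ∑ s', P s a s' * Vval P r γ π s'

/-- Advantage function `A_π = Q_π - V_π`. -/
noncomputable def Adv [DecidableEq S] (P : S → A → S → ℝ) (r : S → A → ℝ) (γ : ℝ) (π : S → A → ℝ)
    (s : S) (a : A) : ℝ :=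
  Qval P r γ π s a - Vval P r γ π s

/-- Expected discounted return `J(π)` from initial distribution `ρ₀`. -/
noncomputable def Jval [DecidableEq S] (P : S → A → S → ℝ) (r : S → A → ℝ) (γ : ℝ) (ρ₀ : S → ℝ)
    (π : S → A → ℝ) : ℝ :=
  ∑ s, ρ₀ s * Vval P r γ π s

/-- Normalized discounted state-visitation distribution `d_π`. -/
noncomputable def dvisit [DecidableEq S] (P : S → A → S → ℝ) (γ : ℝ) (ρ₀ : S → ℝ) (π : S → A → ℝ)
    (s : S) : ℝ :=
  (1 - γ) * ∑' t : ℕ, γ ^ t * ∑ s₀, ρ₀ s₀ * visit P π t s₀ s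

end MDP


section AuxProof

open Finset

set_option linter.unusedSectionVars false

variable {S A : Type*} [Fintype S] [DecidableEq S] [Fintype A]

lemma stepKernel_nonneg {P : S → A → S → ℝ} {π : S → A → ℝ}
    (hP : IsKernel P) (hπ : IsPolicy π) (s s' : S) : 0 ≤ stepKernel P π s s' :=
  Finset.sum_nonneg fun a _ => mul_nonneg (hπ.1 s a) (hP.1 s a s')

lemma stepKernel_rowsum {P : S → A → S → ℝ} {π : S → A → ℝ}
    (hP : IsKernel P) (hπ : IsPolicy π) (s : S) : ∑ s', stepKernel P π s s' = 1 := by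
  simp only [stepKernel]
  rw [Finset.sum_comm]
  calc ∑ a, ∑ s', π s a * P s a s' = ∑ a, π s a * ∑ s', P s a s' := by
        simp [Finset.mul_sum]
    _ = 1 := by simp [hP.2, hπ.2 s]

lemma visit_nonneg {P : S → A → S → ℝ} {π : S → A → ℝ}
    (hP : IsKernel P) (hπ : IsPolicy π) (t : ℕ) (s s' : S) : 0 ≤ visit P π t s s' := by
  induction t generalizing s s' with
  | zero => simp only [visit]; positivity
  | succ t ih =>
    exact Finset.sum_nonneg fun s'' _ => mul_nonneg (ih s s'') (stepKernel_nonneg hP hπ s'' s')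

lemma visit_rowsum {P : S → A → S → ℝ} {π : S → A → ℝ}
    (hP : IsKernel P) (hπ : IsPolicy π) (t : ℕ) (s : S) : ∑ s', visit P π t s s' = 1 := by
  induction t with
  | zero => simp [visit]
  | succ t ih =>
    simp only [visit]
    rw [Finset.sum_comm]
    calc ∑ s'', ∑ s', visit P π t s s'' * stepKernel P π s'' s'
        = ∑ s'', visit P π t s s'' * ∑ s', stepKernel P π s'' s' := by
          simp [Finset.mul_sum]
      _ = 1 := by simp [stepKernel_rowsum hP hπ, ih]

lemma visit_succ_left (P : S → A → S → ℝ) (π : S → A → ℝ) (t : ℕ) (s s' : S) :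
    visit P π (t + 1) s s' = ∑ s'', stepKernel P π s s'' * visit P π t s'' s' := by
  induction t generalizing s s' with
  | zero => simp [visit]
  | succ t ih =>
    show ∑ u, visit P π (t+1) s u * stepKernel P π u s' = _
    calc ∑ u, visit P π (t+1) s u * stepKernel P π u s'
        = ∑ u, (∑ w, stepKernel P π s w * visit P π t w u) * stepKernel P π u s' := by
          simp only [ih]
      _ = ∑ w, stepKernel P π s w * ∑ u, visit P π t w u * stepKernel P π u s' := by
          simp only [Finset.sum_mul, Finset.mul_sum, mul_assoc]
          rw [Finset.sum_comm]
      _ = ∑ w, stepKernel P π s w * visit P π (t+1) w s' := rfl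

/-- occupancy at time t -/
noncomputable def occ (P : S → A → S → ℝ) (ρ₀ : S → ℝ) (π : S → A → ℝ) (t : ℕ) (s : S) : ℝ :=
  ∑ s₀, ρ₀ s₀ * visit P π t s₀ s

lemma occ_nonneg {P : S → A → S → ℝ} {π : S → A → ℝ} {ρ₀ : S → ℝ}
    (hP : IsKernel P) (hπ : IsPolicy π) (hρ : IsDist ρ₀) (t : ℕ) (s : S) :
    0 ≤ occ P ρ₀ π t s :=
  Finset.sum_nonneg fun s₀ _ => mul_nonneg (hρ.1 s₀) (visit_nonneg hP hπ t s₀ s)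

lemma occ_rowsum {P : S → A → S → ℝ} {π : S → A → ℝ} {ρ₀ : S → ℝ}
    (hP : IsKernel P) (hπ : IsPolicy π) (hρ : IsDist ρ₀) (t : ℕ) :
    ∑ s, occ P ρ₀ π t s = 1 := by
  unfold occ
  rw [Finset.sum_comm]
  calc ∑ s₀, ∑ s, ρ₀ s₀ * visit P π t s₀ s
      = ∑ s₀, ρ₀ s₀ * ∑ s, visit P π t s₀ s := by simp [Finset.mul_sum]
    _ = 1 := by simp [visit_rowsum hP hπ, hρ.2]

lemma occ_zero (P : S → A → S → ℝ) (ρ₀ : S → ℝ) (π : S → A → ℝ) (s : S) :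
    occ P ρ₀ π 0 s = ρ₀ s := by
  unfold occ
  simp [visit]

lemma occ_succ (P : S → A → S → ℝ) (ρ₀ : S → ℝ) (π : S → A → ℝ) (t : ℕ) (s' : S) :
    occ P ρ₀ π (t + 1) s' = ∑ s, occ P ρ₀ π t s * stepKernel P π s s' := by
  unfold occ
  simp only [visit]
  simp only [Finset.mul_sum, Finset.sum_mul, mul_assoc]
  rw [Finset.sum_comm]


lemma abs_dot_le {X : Type*} [Fintype X] {p f : X → ℝ} (hp : ∀ s, 0 ≤ p s) {B : ℝ}
    (hf : ∀ s, |f s| ≤ B) :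
    |∑ s, p s * f s| ≤ (∑ s, p s) * B := by
  calc |∑ s, p s * f s| ≤ ∑ s, |p s * f s| := Finset.abs_sum_le_sum_abs _ _
    _ ≤ ∑ s, p s * B := Finset.sum_le_sum fun s _ => by
        rw [abs_mul, abs_of_nonneg (hp s)]
        exact mul_le_mul_of_nonneg_left (hf s) (hp s)
    _ = (∑ s, p s) * B := by rw [← Finset.sum_mul]

/-- uniform bound on rewards -/
noncomputable def Rb (r : S → A → ℝ) : ℝ := ∑ s, ∑ a, |r s a|

lemma Rb_nonneg (r : S → A → ℝ) : 0 ≤ Rb r :=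
  Finset.sum_nonneg fun _ _ => Finset.sum_nonneg fun _ _ => abs_nonneg _

lemma abs_rewardOf_le {σ : S → A → ℝ} (hσ : IsPolicy σ) (r : S → A → ℝ) (s : S) :
    |rewardOf r σ s| ≤ Rb r := by
  have h1 : |rewardOf r σ s| ≤ ∑ a, |r s a| := by
    calc |rewardOf r σ s| ≤ (∑ a, σ s a) * (∑ a, |r s a|) := by
          exact abs_dot_le (fun a => hσ.1 s a) fun a =>
            Finset.single_le_sum (f := fun a => |r s a|) (fun a _ => abs_nonneg _)
              (Finset.mem_univ a)
      _ = ∑ a, |r s a| := by rw [hσ.2 s, one_mul]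
  exact h1.trans (Finset.single_le_sum (f := fun s => ∑ a, |r s a|)
    (fun s _ => Finset.sum_nonneg fun _ _ => abs_nonneg _) (Finset.mem_univ s))

lemma summable_geo_bound {γ C : ℝ} (hγ0 : 0 ≤ γ) (hγ1 : γ < 1) {g : ℕ → ℝ}
    (h : ∀ t, |g t| ≤ C * γ ^ t) : Summable g := by
  refine Summable.of_norm_bounded (Summable.mul_left C (summable_geometric_of_lt_one hγ0 hγ1)) ?_
  simpa using h

lemma abs_visit_reward_le {P : S → A → S → ℝ} {σ : S → A → ℝ}
    (hP : IsKernel P) (hσ : IsPolicy σ) (r : S → A → ℝ) (t : ℕ) (s : S) :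
    |∑ s', visit P σ t s s' * rewardOf r σ s'| ≤ Rb r := by
  have := abs_dot_le (fun s' => visit_nonneg hP hσ t s s') (fun s' => abs_rewardOf_le hσ r s')
  rwa [visit_rowsum hP hσ, one_mul] at this

lemma summable_Vterm {P : S → A → S → ℝ} {σ : S → A → ℝ} {γ : ℝ}
    (hP : IsKernel P) (hσ : IsPolicy σ) (hγ0 : 0 ≤ γ) (hγ1 : γ < 1) (r : S → A → ℝ) (s : S) :
    Summable (fun t => γ ^ t * ∑ s', visit P σ t s s' * rewardOf r σ s') := by
  refine summable_geo_bound hγ0 hγ1 (C := Rb r) fun t => ?_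
  rw [abs_mul, abs_of_nonneg (pow_nonneg hγ0 t), mul_comm]
  exact mul_le_mul_of_nonneg_right (abs_visit_reward_le hP hσ r t s) (pow_nonneg hγ0 t)

lemma abs_tsum_geo_le {γ C : ℝ} (hγ0 : 0 ≤ γ) (hγ1 : γ < 1) {g : ℕ → ℝ}
    (h : ∀ t, |g t| ≤ C * γ ^ t) : |∑' t, g t| ≤ C / (1 - γ) := by
  have hg : Summable g := summable_geo_bound hγ0 hγ1 h
  have habs : Summable fun t => |g t| := hg.abs
  have h2 : Summable fun t : ℕ => C * γ ^ t :=
    (summable_geometric_of_lt_one hγ0 hγ1).mul_left C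
  calc |∑' t, g t| ≤ ∑' t, |g t| := by
        simpa [Real.norm_eq_abs] using
          norm_tsum_le_tsum_norm (f := g) (by simpa [Real.norm_eq_abs] using habs)
    _ ≤ ∑' t : ℕ, C * γ ^ t := Summable.tsum_le_tsum h habs h2
    _ = C / (1 - γ) := by rw [tsum_mul_left, tsum_geometric_of_lt_one hγ0 hγ1]; ring

lemma abs_Vval_le {P : S → A → S → ℝ} {σ : S → A → ℝ} {γ : ℝ}
    (hP : IsKernel P) (hσ : IsPolicy σ) (hγ0 : 0 ≤ γ) (hγ1 : γ < 1) (r : S → A → ℝ) (s : S) :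
    |Vval P r γ σ s| ≤ Rb r / (1 - γ) := by
  rw [Vval]
  refine abs_tsum_geo_le hγ0 hγ1 fun t => ?_
  rw [abs_mul, abs_of_nonneg (pow_nonneg hγ0 t), mul_comm]
  exact mul_le_mul_of_nonneg_right (abs_visit_reward_le hP hσ r t s) (pow_nonneg hγ0 t)

lemma Vval_bellman {P : S → A → S → ℝ} {σ : S → A → ℝ} {γ : ℝ}
    (hP : IsKernel P) (hσ : IsPolicy σ) (hγ0 : 0 ≤ γ) (hγ1 : γ < 1) (r : S → A → ℝ) (s : S) :
    Vval P r γ σ s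
      = rewardOf r σ s + γ * ∑ s', stepKernel P σ s s' * Vval P r γ σ s' := by
  have hsum := summable_Vterm hP hσ hγ0 hγ1 r s
  rw [Vval, Summable.tsum_eq_zero_add hsum]
  congr 1
  · simp [visit, Finset.sum_ite_eq, rewardOf]
  · have key : ∀ t : ℕ, γ ^ (t + 1) * ∑ s', visit P σ (t+1) s s' * rewardOf r σ s'
        = ∑ s'', γ * (stepKernel P σ s s'' *
            (γ ^ t * ∑ s', visit P σ t s'' s' * rewardOf r σ s')) := by
      intro t
      simp only [visit_succ_left, Finset.sum_mul, Finset.mul_sum]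
      rw [Finset.sum_comm]
      refine Finset.sum_congr rfl fun s'' _ => Finset.sum_congr rfl fun s' _ => ?_
      ring
    simp only [key]
    rw [Summable.tsum_finsetSum (fun s'' _ =>
      (((summable_Vterm hP hσ hγ0 hγ1 r s'').mul_left (stepKernel P σ s s'')).mul_left γ))]
    rw [Finset.mul_sum]
    refine Finset.sum_congr rfl fun s'' _ => ?_
    rw [tsum_mul_left, tsum_mul_left, Vval]

lemma wval_eq {P : S → A → S → ℝ} {π π' : S → A → ℝ} {γ : ℝ} (hπ' : IsPolicy π')
    (r : S → A → ℝ) (s : S) :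
    ∑ a, π' s a * Adv P r γ π s a
      = rewardOf r π' s + γ * (∑ s', stepKernel P π' s s' * Vval P r γ π s')
        - Vval P r γ π s := by
  simp only [Adv, Qval, mul_sub, mul_add, Finset.sum_sub_distrib, Finset.sum_add_distrib]
  rw [← Finset.sum_mul, hπ'.2 s, one_mul]
  congr 1
  unfold rewardOf
  congr 1
  simp only [stepKernel, Finset.sum_mul, Finset.mul_sum]
  rw [Finset.sum_comm]
  refine Finset.sum_congr rfl fun a _ => Finset.sum_congr rfl fun s' _ => ?_
  ring


lemma occ_le_one {P : S → A → S → ℝ} {π : S → A → ℝ} {ρ₀ : S → ℝ}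
    (hP : IsKernel P) (hπ : IsPolicy π) (hρ : IsDist ρ₀) (t : ℕ) (s : S) :
    occ P ρ₀ π t s ≤ 1 := by
  rw [← occ_rowsum hP hπ hρ t]
  exact Finset.single_le_sum (f := fun s => occ P ρ₀ π t s)
    (fun s _ => occ_nonneg hP hπ hρ t s) (Finset.mem_univ s)

lemma abs_occ_dot_le {P : S → A → S → ℝ} {π : S → A → ℝ} {ρ₀ : S → ℝ}
    (hP : IsKernel P) (hπ : IsPolicy π) (hρ : IsDist ρ₀) (f : S → ℝ) (t : ℕ) :
    |∑ s, occ P ρ₀ π t s * f s| ≤ ∑ s, |f s| := by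
  have := abs_dot_le (fun s => occ_nonneg hP hπ hρ t s)
    (fun s => Finset.single_le_sum (f := fun s => |f s|) (fun s _ => abs_nonneg _)
      (Finset.mem_univ s))
  rwa [occ_rowsum hP hπ hρ, one_mul] at this

lemma summable_occ_dot {P : S → A → S → ℝ} {π : S → A → ℝ} {ρ₀ : S → ℝ} {γ : ℝ}
    (hP : IsKernel P) (hπ : IsPolicy π) (hρ : IsDist ρ₀) (hγ0 : 0 ≤ γ) (hγ1 : γ < 1)
    (f : S → ℝ) :
    Summable fun t : ℕ => γ ^ t * ∑ s, occ P ρ₀ π t s * f s := by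
  refine summable_geo_bound hγ0 hγ1 (C := ∑ s, |f s|) fun t => ?_
  rw [abs_mul, abs_of_nonneg (pow_nonneg hγ0 t), mul_comm]
  exact mul_le_mul_of_nonneg_right (abs_occ_dot_le hP hπ hρ f t) (pow_nonneg hγ0 t)

lemma Jval_eq_tsum {P : S → A → S → ℝ} {σ : S → A → ℝ} {ρ₀ : S → ℝ} {γ : ℝ}
    (hP : IsKernel P) (hσ : IsPolicy σ) (hρ : IsDist ρ₀) (hγ0 : 0 ≤ γ) (hγ1 : γ < 1)
    (r : S → A → ℝ) :
    Jval P r γ ρ₀ σ = ∑' t : ℕ, γ ^ t * ∑ s, occ P ρ₀ σ t s * rewardOf r σ s := by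
  unfold Jval Vval
  calc ∑ s, ρ₀ s * ∑' t : ℕ, (γ ^ t * ∑ s', visit P σ t s s' * rewardOf r σ s')
      = ∑ s, ∑' t : ℕ, ρ₀ s * (γ ^ t * ∑ s', visit P σ t s s' * rewardOf r σ s') := by
        exact Finset.sum_congr rfl fun s _ => tsum_mul_left.symm
    _ = ∑' t : ℕ, ∑ s, ρ₀ s * (γ ^ t * ∑ s', visit P σ t s s' * rewardOf r σ s') :=
        (Summable.tsum_finsetSum fun s _ => (summable_Vterm hP hσ hγ0 hγ1 r s).mul_left (ρ₀ s)).symm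
    _ = ∑' t : ℕ, γ ^ t * ∑ s', occ P ρ₀ σ t s' * rewardOf r σ s' := by
        refine tsum_congr fun t => ?_
        unfold occ
        simp only [Finset.mul_sum, Finset.sum_mul]
        rw [Finset.sum_comm]
        exact Finset.sum_congr rfl fun s _ => Finset.sum_congr rfl fun s' _ => by ring

lemma occ_dot_step {P : S → A → S → ℝ} {π : S → A → ℝ} {ρ₀ : S → ℝ} (t : ℕ) (g : S → ℝ) :
    ∑ s, occ P ρ₀ π t s * ∑ s', stepKernel P π s s' * g s'
      = ∑ s', occ P ρ₀ π (t + 1) s' * g s' := by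
  simp only [occ_succ, Finset.sum_mul, Finset.mul_sum]
  rw [Finset.sum_comm]
  exact Finset.sum_congr rfl fun s _ => Finset.sum_congr rfl fun s' _ => by ring

lemma tsum_telescope_neg {a : ℕ → ℝ} (hsum : Summable fun t => a (t + 1) - a t)
    (h0 : Filter.Tendsto a Filter.atTop (nhds 0)) :
    ∑' t : ℕ, (a (t + 1) - a t) = -a 0 := by
  refine HasSum.tsum_eq ?_
  rw [hsum.hasSum_iff_tendsto_nat]
  have : Filter.Tendsto (fun n => a n - a 0) Filter.atTop (nhds (0 - a 0)) :=
    h0.sub tendsto_const_nhds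
  simpa [Finset.sum_range_sub (f := a)] using this

/-- Performance difference lemma. -/
lemma pdl {P : S → A → S → ℝ} {π π' : S → A → ℝ} {ρ₀ : S → ℝ} {γ : ℝ}
    (hP : IsKernel P) (hπ : IsPolicy π) (hπ' : IsPolicy π') (hρ : IsDist ρ₀)
    (hγ0 : 0 ≤ γ) (hγ1 : γ < 1) (r : S → A → ℝ) :
    Jval P r γ ρ₀ π' - Jval P r γ ρ₀ π
      = ∑' t : ℕ, γ ^ t * ∑ s, occ P ρ₀ π' t s * (∑ a, π' s a * Adv P r γ π s a) := by
  set w : S → ℝ := fun s => ∑ a, π' s a * Adv P r γ π s a with hw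
  set a : ℕ → ℝ := fun t => γ ^ t * ∑ s, occ P ρ₀ π' t s * Vval P r γ π s with ha
  have hterm : ∀ t, γ ^ t * ∑ s, occ P ρ₀ π' t s * w s
      = γ ^ t * ∑ s, occ P ρ₀ π' t s * rewardOf r π' s + (a (t + 1) - a t) := by
    intro t
    have hsplit : ∑ s, occ P ρ₀ π' t s * w s
        = ∑ s, occ P ρ₀ π' t s * rewardOf r π' s
          + γ * ∑ s, occ P ρ₀ π' t s * ∑ s', stepKernel P π' s s' * Vval P r γ π s'
          - ∑ s, occ P ρ₀ π' t s * Vval P r γ π s := by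
      simp only [hw, wval_eq hπ' r, mul_add, mul_sub,
        Finset.sum_add_distrib, Finset.sum_sub_distrib, Finset.mul_sum]
      ring_nf
      rw [add_sub_right_comm]
      congr 1
      refine Finset.sum_congr rfl fun x _ => Finset.sum_congr rfl fun y _ => ?_
      ring
    rw [hsplit, occ_dot_step]
    simp only [ha]
    rw [pow_succ]
    ring
  have hsumr : Summable fun t : ℕ => γ ^ t * ∑ s, occ P ρ₀ π' t s * rewardOf r π' s :=
    summable_occ_dot hP hπ' hρ hγ0 hγ1 _
  have hsumw : Summable fun t : ℕ => γ ^ t * ∑ s, occ P ρ₀ π' t s * w s :=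
    summable_occ_dot hP hπ' hρ hγ0 hγ1 _
  have hsumtel : Summable fun t => a (t + 1) - a t := by
    have : (fun t => a (t + 1) - a t)
        = fun t => (γ ^ t * ∑ s, occ P ρ₀ π' t s * w s)
          - γ ^ t * ∑ s, occ P ρ₀ π' t s * rewardOf r π' s := by
      funext t
      rw [hterm t]
      ring
    rw [this]
    exact hsumw.sub hsumr
  have htend : Filter.Tendsto a Filter.atTop (nhds 0) := by
    have hb : ∀ t, |a t| ≤ (∑ s, |Vval P r γ π s|) * γ ^ t := by
      intro t
      rw [ha]
      simp only
      rw [abs_mul, abs_of_nonneg (pow_nonneg hγ0 t), mul_comm]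
      exact mul_le_mul_of_nonneg_right (abs_occ_dot_le hP hπ' hρ _ t) (pow_nonneg hγ0 t)
    have hgeo : Filter.Tendsto (fun t : ℕ => (∑ s, |Vval P r γ π s|) * γ ^ t)
        Filter.atTop (nhds 0) := by
      simpa using (tendsto_pow_atTop_nhds_zero_of_lt_one hγ0 hγ1).const_mul
        (∑ s, |Vval P r γ π s|)
    exact squeeze_zero_norm hb hgeo
  calc Jval P r γ ρ₀ π' - Jval P r γ ρ₀ π
      = (∑' t : ℕ, γ ^ t * ∑ s, occ P ρ₀ π' t s * rewardOf r π' s) - a 0 := by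
        rw [Jval_eq_tsum hP hπ' hρ hγ0 hγ1 r]
        congr 1
        rw [ha]
        simp only [pow_zero, one_mul, occ_zero, Jval]
    _ = (∑' t : ℕ, γ ^ t * ∑ s, occ P ρ₀ π' t s * rewardOf r π' s)
          + ∑' t : ℕ, (a (t + 1) - a t) := by
        rw [tsum_telescope_neg hsumtel htend]
        ring
    _ = ∑' t : ℕ, (γ ^ t * ∑ s, occ P ρ₀ π' t s * rewardOf r π' s + (a (t + 1) - a t)) :=
        (Summable.tsum_add hsumr hsumtel).symm
    _ = ∑' t : ℕ, γ ^ t * ∑ s, occ P ρ₀ π' t s * w s := by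
        exact tsum_congr fun t => (hterm t).symm


/-- total variation of policies at state s (times 2) -/
noncomputable def qtv (π π' : S → A → ℝ) (s : S) : ℝ := ∑ a, |π' s a - π s a|

/-- L1 distance between occupancies -/
noncomputable def eL1 (P : S → A → S → ℝ) (ρ₀ : S → ℝ) (π π' : S → A → ℝ) (t : ℕ) : ℝ :=
  ∑ s, |occ P ρ₀ π' t s - occ P ρ₀ π t s|

/-- mixing error at time t -/
noncomputable def epst (P : S → A → S → ℝ) (ρ₀ : S → ℝ) (π π' : S → A → ℝ) (t : ℕ) : ℝ :=
  ∑ s, occ P ρ₀ π t s * qtv π π' s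

lemma qtv_nonneg (π π' : S → A → ℝ) (s : S) : 0 ≤ qtv π π' s :=
  Finset.sum_nonneg fun _ _ => abs_nonneg _

lemma qtv_le_two {π π' : S → A → ℝ} (hπ : IsPolicy π) (hπ' : IsPolicy π') (s : S) :
    qtv π π' s ≤ 2 := by
  have : ∀ a, |π' s a - π s a| ≤ π' s a + π s a := fun a => by
    have := abs_sub (π' s a) (π s a)
    rwa [abs_of_nonneg (hπ'.1 s a), abs_of_nonneg (hπ.1 s a)] at this
  calc qtv π π' s ≤ ∑ a, (π' s a + π s a) := Finset.sum_le_sum fun a _ => this a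
    _ = 2 := by rw [Finset.sum_add_distrib, hπ'.2 s, hπ.2 s]; norm_num

lemma epst_nonneg {P : S → A → S → ℝ} {π π' : S → A → ℝ} {ρ₀ : S → ℝ}
    (hP : IsKernel P) (hπ : IsPolicy π) (hρ : IsDist ρ₀) (t : ℕ) :
    0 ≤ epst P ρ₀ π π' t :=
  Finset.sum_nonneg fun s _ => mul_nonneg (occ_nonneg hP hπ hρ t s) (qtv_nonneg π π' s)

lemma epst_le_two {P : S → A → S → ℝ} {π π' : S → A → ℝ} {ρ₀ : S → ℝ}
    (hP : IsKernel P) (hπ : IsPolicy π) (hπ' : IsPolicy π') (hρ : IsDist ρ₀) (t : ℕ) :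
    epst P ρ₀ π π' t ≤ 2 := by
  calc epst P ρ₀ π π' t ≤ ∑ s, occ P ρ₀ π t s * 2 :=
        Finset.sum_le_sum fun s _ =>
          mul_le_mul_of_nonneg_left (qtv_le_two hπ hπ' s) (occ_nonneg hP hπ hρ t s)
    _ = 2 := by rw [← Finset.sum_mul, occ_rowsum hP hπ hρ]; norm_num

lemma eL1_zero (P : S → A → S → ℝ) (ρ₀ : S → ℝ) (π π' : S → A → ℝ) :
    eL1 P ρ₀ π π' 0 = 0 := by
  unfold eL1
  simp [occ_zero]

lemma abs_stepdiff_le {P : S → A → S → ℝ} {π π' : S → A → ℝ} (hP : IsKernel P) (s : S) :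
    ∑ s', |stepKernel P π' s s' - stepKernel P π s s'| ≤ qtv π π' s := by
  have h1 : ∀ s', |stepKernel P π' s s' - stepKernel P π s s'|
      ≤ ∑ a, |π' s a - π s a| * P s a s' := by
    intro s'
    unfold stepKernel
    rw [← Finset.sum_sub_distrib]
    calc |∑ a, (π' s a * P s a s' - π s a * P s a s')|
        ≤ ∑ a, |π' s a * P s a s' - π s a * P s a s'| := Finset.abs_sum_le_sum_abs _ _
      _ = ∑ a, |π' s a - π s a| * P s a s' := by
          refine Finset.sum_congr rfl fun a _ => ?_
          rw [← sub_mul, abs_mul, abs_of_nonneg (hP.1 s a s')]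
  calc ∑ s', |stepKernel P π' s s' - stepKernel P π s s'|
      ≤ ∑ s', ∑ a, |π' s a - π s a| * P s a s' := Finset.sum_le_sum fun s' _ => h1 s'
    _ = ∑ a, |π' s a - π s a| * ∑ s', P s a s' := by
        rw [Finset.sum_comm]
        exact Finset.sum_congr rfl fun a _ => by rw [Finset.mul_sum]
    _ = qtv π π' s := by
        unfold qtv
        exact Finset.sum_congr rfl fun a _ => by rw [hP.2 s a, mul_one]

lemma eL1_succ_le {P : S → A → S → ℝ} {π π' : S → A → ℝ} {ρ₀ : S → ℝ}
    (hP : IsKernel P) (hπ : IsPolicy π) (hπ' : IsPolicy π') (hρ : IsDist ρ₀) (t : ℕ) :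
    eL1 P ρ₀ π π' (t + 1) ≤ eL1 P ρ₀ π π' t + epst P ρ₀ π π' t := by
  have hdecomp : ∀ s', occ P ρ₀ π' (t + 1) s' - occ P ρ₀ π (t + 1) s'
      = (∑ s, (occ P ρ₀ π' t s - occ P ρ₀ π t s) * stepKernel P π' s s')
        + ∑ s, occ P ρ₀ π t s * (stepKernel P π' s s' - stepKernel P π s s') := by
    intro s'
    rw [occ_succ, occ_succ, ← Finset.sum_add_distrib, ← Finset.sum_sub_distrib]
    exact Finset.sum_congr rfl fun s _ => by ring
  have hbound : ∀ s', |occ P ρ₀ π' (t + 1) s' - occ P ρ₀ π (t + 1) s'|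
      ≤ (∑ s, |occ P ρ₀ π' t s - occ P ρ₀ π t s| * stepKernel P π' s s')
        + ∑ s, occ P ρ₀ π t s * |stepKernel P π' s s' - stepKernel P π s s'| := by
    intro s'
    rw [hdecomp s']
    refine (abs_add_le _ _).trans (add_le_add ?_ ?_)
    · refine (Finset.abs_sum_le_sum_abs _ _).trans
        (Finset.sum_le_sum fun s _ => le_of_eq ?_)
      rw [abs_mul, abs_of_nonneg (stepKernel_nonneg hP hπ' s s')]
    · refine (Finset.abs_sum_le_sum_abs _ _).trans
        (Finset.sum_le_sum fun s _ => le_of_eq ?_)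
      rw [abs_mul, abs_of_nonneg (occ_nonneg hP hπ hρ t s)]
  calc eL1 P ρ₀ π π' (t + 1)
      ≤ ∑ s', ((∑ s, |occ P ρ₀ π' t s - occ P ρ₀ π t s| * stepKernel P π' s s')
          + ∑ s, occ P ρ₀ π t s * |stepKernel P π' s s' - stepKernel P π s s'|) :=
        Finset.sum_le_sum fun s' _ => hbound s'
    _ = (∑ s, |occ P ρ₀ π' t s - occ P ρ₀ π t s| * ∑ s', stepKernel P π' s s')
          + ∑ s, occ P ρ₀ π t s * ∑ s', |stepKernel P π' s s' - stepKernel P π s s'| := by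
        rw [Finset.sum_add_distrib, Finset.sum_comm]
        congr 1
        · exact Finset.sum_congr rfl fun s _ => by rw [Finset.mul_sum]
        · rw [Finset.sum_comm]
          exact Finset.sum_congr rfl fun s _ => by rw [Finset.mul_sum]
    _ ≤ eL1 P ρ₀ π π' t + epst P ρ₀ π π' t := by
        refine add_le_add ?_ ?_
        · refine le_of_eq (Finset.sum_congr rfl fun s _ => ?_)
          rw [stepKernel_rowsum hP hπ', mul_one]
        · exact Finset.sum_le_sum fun s _ =>
            mul_le_mul_of_nonneg_left (abs_stepdiff_le hP s) (occ_nonneg hP hπ hρ t s)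

lemma eL1_le_sum {P : S → A → S → ℝ} {π π' : S → A → ℝ} {ρ₀ : S → ℝ}
    (hP : IsKernel P) (hπ : IsPolicy π) (hπ' : IsPolicy π') (hρ : IsDist ρ₀) (t : ℕ) :
    eL1 P ρ₀ π π' t ≤ ∑ k ∈ Finset.range t, epst P ρ₀ π π' k := by
  induction t with
  | zero => simp [eL1_zero]
  | succ t ih =>
    rw [Finset.sum_range_succ]
    exact (eL1_succ_le hP hπ hπ' hρ t).trans (add_le_add_left ih _)


lemma summable_geo_range_sum {γ : ℝ} (hγ0 : 0 ≤ γ) (hγ1 : γ < 1) {ε : ℕ → ℝ}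
    (hε0 : ∀ k, 0 ≤ ε k) (hε2 : ∀ k, ε k ≤ 2) :
    Summable fun t : ℕ => γ ^ t * ∑ k ∈ Finset.range t, ε k := by
  have hnorm : ‖γ‖ < 1 := by rwa [Real.norm_eq_abs, abs_of_nonneg hγ0]
  have h := (summable_pow_mul_geometric_of_norm_lt_one 1 hnorm).mul_left 2
  refine Summable.of_norm_bounded h fun t => ?_
  rw [Real.norm_eq_abs, abs_mul, abs_of_nonneg (pow_nonneg hγ0 t),
    abs_of_nonneg (Finset.sum_nonneg fun k _ => hε0 k)]
  have hb : ∑ k ∈ Finset.range t, ε k ≤ 2 * t := by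
    calc ∑ k ∈ Finset.range t, ε k ≤ ∑ _k ∈ Finset.range t, (2:ℝ) :=
          Finset.sum_le_sum fun k _ => hε2 k
      _ = 2 * t := by simp [mul_comm]
  calc γ ^ t * ∑ k ∈ Finset.range t, ε k ≤ γ ^ t * (2 * t) :=
        mul_le_mul_of_nonneg_left hb (pow_nonneg hγ0 t)
    _ = 2 * ((t:ℝ) ^ 1 * γ ^ t) := by ring

lemma tsum_geo_range_sum {γ : ℝ} (hγ0 : 0 ≤ γ) (hγ1 : γ < 1) {ε : ℕ → ℝ}
    (hε0 : ∀ k, 0 ≤ ε k) (hε2 : ∀ k, ε k ≤ 2) :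
    ∑' t : ℕ, γ ^ t * ∑ k ∈ Finset.range t, ε k
      = (γ / (1 - γ)) * ∑' k : ℕ, γ ^ k * ε k := by
  set F : ℕ × ℕ → ℝ := fun p => if p.2 < p.1 then γ ^ p.1 * ε p.2 else 0 with hF
  have hF0 : ∀ p, 0 ≤ F p := by
    intro p
    by_cases h : p.2 < p.1 <;>
      simp [hF, h, mul_nonneg (pow_nonneg hγ0 _) (hε0 _)]
  have hrowsummable : ∀ t, Summable fun k => F (t, k) := by
    intro t
    refine summable_of_ne_finset_zero (s := Finset.range t) fun k hk => ?_
    simp only [hF]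
    rw [if_neg]
    exact fun h => hk (Finset.mem_range.mpr h)
  have hrow : ∀ t, ∑' k, F (t, k) = γ ^ t * ∑ k ∈ Finset.range t, ε k := by
    intro t
    rw [tsum_eq_sum (s := Finset.range t) (fun k hk => by
      simp only [hF]; rw [if_neg]; exact fun h => hk (Finset.mem_range.mpr h))]
    rw [Finset.mul_sum]
    exact Finset.sum_congr rfl fun k hk => by simp [hF, Finset.mem_range.mp hk]
  have hsumrows : Summable fun t => ∑' k, F (t, k) := by
    simp only [hrow]
    exact summable_geo_range_sum hγ0 hγ1 hε0 hε2
  have hFsum : Summable F := (summable_prod_of_nonneg hF0).mpr ⟨hrowsummable, hsumrows⟩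
  have hcol : ∀ k, ∑' t, F (t, k) = (γ / (1 - γ)) * (γ ^ k * ε k) := by
    intro k
    have hsummable_col : Summable fun t => F (t, k) := by
      refine summable_geo_bound hγ0 hγ1 (C := ε k) fun t => ?_
      by_cases h : k < t
      · simp only [hF, if_pos h]
        rw [abs_of_nonneg (mul_nonneg (pow_nonneg hγ0 t) (hε0 k))]
        exact le_of_eq (mul_comm _ _)
      · simp only [hF, if_neg h, abs_zero]
        exact mul_nonneg (hε0 k) (pow_nonneg hγ0 t)
    rw [← Summable.sum_add_tsum_nat_add (k + 1) hsummable_col]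
    have h1 : ∑ i ∈ Finset.range (k + 1), F (i, k) = 0 := by
      refine Finset.sum_eq_zero fun i hi => ?_
      have : ¬ k < i := by
        have := Finset.mem_range.mp hi
        omega
      simp [hF, this]
    have h2 : ∀ n : ℕ, F (n + (k + 1), k) = (γ ^ (k + 1) * ε k) * γ ^ n := by
      intro n
      have hlt : k < n + (k + 1) := by omega
      simp only [hF, if_pos hlt]
      rw [pow_add]
      ring
    rw [h1, zero_add]
    simp only [h2]
    rw [tsum_mul_left, tsum_geometric_of_lt_one hγ0 hγ1, pow_succ, div_eq_mul_inv]
    ring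
  calc ∑' t : ℕ, γ ^ t * ∑ k ∈ Finset.range t, ε k
      = ∑' t : ℕ, ∑' k : ℕ, F (t, k) := tsum_congr fun t => (hrow t).symm
    _ = ∑' k : ℕ, ∑' t : ℕ, F (t, k) := by
        exact (Summable.tsum_comm (f := fun t k => F (t, k)) hFsum).symm
    _ = ∑' k : ℕ, (γ / (1 - γ)) * (γ ^ k * ε k) := tsum_congr hcol
    _ = (γ / (1 - γ)) * ∑' k : ℕ, γ ^ k * ε k := tsum_mul_left

lemma summable_occ_single {P : S → A → S → ℝ} {π : S → A → ℝ} {ρ₀ : S → ℝ} {γ : ℝ}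
    (hP : IsKernel P) (hπ : IsPolicy π) (hρ : IsDist ρ₀) (hγ0 : 0 ≤ γ) (hγ1 : γ < 1)
    (s : S) (f : S → ℝ) :
    Summable fun t : ℕ => γ ^ t * occ P ρ₀ π t s * f s := by
  refine summable_geo_bound hγ0 hγ1 (C := |f s|) fun t => ?_
  rw [abs_mul, abs_mul, abs_of_nonneg (pow_nonneg hγ0 t),
    abs_of_nonneg (occ_nonneg hP hπ hρ t s)]
  calc γ ^ t * occ P ρ₀ π t s * |f s| ≤ γ ^ t * 1 * |f s| :=
        mul_le_mul_of_nonneg_right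
          (mul_le_mul_of_nonneg_left (occ_le_one hP hπ hρ t s) (pow_nonneg hγ0 t))
          (abs_nonneg _)
    _ = |f s| * γ ^ t := by ring

lemma dvisit_dot {P : S → A → S → ℝ} {π : S → A → ℝ} {ρ₀ : S → ℝ} {γ : ℝ}
    (hP : IsKernel P) (hπ : IsPolicy π) (hρ : IsDist ρ₀) (hγ0 : 0 ≤ γ) (hγ1 : γ < 1)
    (f : S → ℝ) :
    ∑ s, dvisit P γ ρ₀ π s * f s
      = (1 - γ) * ∑' t : ℕ, γ ^ t * ∑ s, occ P ρ₀ π t s * f s := by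
  have hocc : ∀ s, dvisit P γ ρ₀ π s = (1 - γ) * ∑' t : ℕ, γ ^ t * occ P ρ₀ π t s :=
    fun s => rfl
  calc ∑ s, dvisit P γ ρ₀ π s * f s
      = ∑ s, (1 - γ) * ∑' t : ℕ, γ ^ t * occ P ρ₀ π t s * f s := by
        refine Finset.sum_congr rfl fun s _ => ?_
        rw [hocc s, mul_assoc]
        congr 1
        rw [← tsum_mul_right]
    _ = (1 - γ) * ∑ s, ∑' t : ℕ, γ ^ t * occ P ρ₀ π t s * f s := by
        rw [Finset.mul_sum]
    _ = (1 - γ) * ∑' t : ℕ, ∑ s, γ ^ t * occ P ρ₀ π t s * f s := by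
        rw [Summable.tsum_finsetSum (fun s _ => summable_occ_single hP hπ hρ hγ0 hγ1 s f)]
    _ = (1 - γ) * ∑' t : ℕ, γ ^ t * ∑ s, occ P ρ₀ π t s * f s := by
        congr 1
        refine tsum_congr fun t => ?_
        rw [Finset.mul_sum]
        exact Finset.sum_congr rfl fun s _ => by ring

lemma dvisit_nonneg {P : S → A → S → ℝ} {π : S → A → ℝ} {ρ₀ : S → ℝ} {γ : ℝ}
    (hP : IsKernel P) (hπ : IsPolicy π) (hρ : IsDist ρ₀) (hγ0 : 0 ≤ γ) (hγ1 : γ < 1)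
    (s : S) : 0 ≤ dvisit P γ ρ₀ π s := by
  unfold dvisit
  refine mul_nonneg (by linarith) (tsum_nonneg fun t => ?_)
  exact mul_nonneg (pow_nonneg hγ0 t)
    (Finset.sum_nonneg fun s₀ _ => mul_nonneg (hρ.1 s₀) (visit_nonneg hP hπ t s₀ s))


lemma abs_tsum_le_tsum' {u v : ℕ → ℝ} (h : ∀ t, |u t| ≤ v t) (hv : Summable v) :
    |∑' t, u t| ≤ ∑' t, v t := by
  have hu : Summable u := Summable.of_norm_bounded hv (by simpa using h)
  calc |∑' t, u t| ≤ ∑' t, |u t| := by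
        simpa [Real.norm_eq_abs] using
          norm_tsum_le_tsum_norm (f := u) (by simpa [Real.norm_eq_abs] using hu.abs)
    _ ≤ ∑' t, v t := Summable.tsum_le_tsum h hu.abs hv

end AuxProof

/-- **Surrogate-objective approximation bound** behind trust-region methods:
`|J(π') − L_π(π')| ≤ (2γ/(1−γ)²) A_max δ`. -/
theorem surrogate_objective_bound {S A : Type*} [Fintype S] [DecidableEq S] [Fintype A]
    (P : S → A → S → ℝ) (r : S → A → ℝ) (γ : ℝ) (ρ₀ : S → ℝ) (π π' : S → A → ℝ)
    (δ Amax : ℝ)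
    (hP : IsKernel P) (hπ : IsPolicy π) (hπ' : IsPolicy π') (hρ : IsDist ρ₀)
    (hγ0 : 0 ≤ γ) (hγ1 : γ < 1)
    (hA : ∀ s a, |Adv P r γ π s a| ≤ Amax)
    (hδ : ∑ s, dvisit P γ ρ₀ π s * dtv (π' s) (π s) ≤ δ) :
    |Jval P r γ ρ₀ π' -
        (Jval P r γ ρ₀ π +
          (1 / (1 - γ)) * ∑ s, dvisit P γ ρ₀ π s * ∑ a, π' s a * Adv P r γ π s a)| ≤
      (2 * γ / (1 - γ) ^ 2) * Amax * δ := by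
  have hSne : Nonempty S := by
    by_contra h
    have : IsEmpty S := not_nonempty_iff.mp h
    simpa using hρ.2
  obtain ⟨s0⟩ := hSne
  have hAne : Nonempty A := by
    by_contra h
    have : IsEmpty A := not_nonempty_iff.mp h
    simpa using hπ.2 s0
  obtain ⟨a0⟩ := hAne
  have hAmax : 0 ≤ Amax := (abs_nonneg _).trans (hA s0 a0)
  have h1γ : (0:ℝ) < 1 - γ := by linarith
  have hwle : ∀ s, |∑ a, π' s a * Adv P r γ π s a| ≤ Amax := by
    intro s
    have := abs_dot_le (fun a => hπ'.1 s a) (fun a => hA s a)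
    rwa [hπ'.2 s, one_mul] at this
  -- epsilon properties
  have hε0 : ∀ k, 0 ≤ epst P ρ₀ π π' k := epst_nonneg hP hπ hρ
  have hε2 : ∀ k, epst P ρ₀ π π' k ≤ 2 := epst_le_two hP hπ hπ' hρ
  -- key: discounted sum of epst bounded via δ
  have hdtv_eps : ∀ t, ∑ s, occ P ρ₀ π t s * dtv (π' s) (π s)
      = (1/2) * epst P ρ₀ π π' t := by
    intro t
    unfold epst qtv dtv
    rw [Finset.mul_sum]
    exact Finset.sum_congr rfl fun s _ => by ring
  have hεsum : Summable fun k : ℕ => γ ^ k * epst P ρ₀ π π' k := by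
    refine summable_geo_bound hγ0 hγ1 (C := 2) fun k => ?_
    rw [abs_mul, abs_of_nonneg (pow_nonneg hγ0 k), abs_of_nonneg (hε0 k), mul_comm]
    exact mul_le_mul_of_nonneg_right (hε2 k) (pow_nonneg hγ0 k)
  have hkey : ∑' k : ℕ, γ ^ k * epst P ρ₀ π π' k ≤ 2 * δ / (1 - γ) := by
    have hdtvsum : ∑ s, dvisit P γ ρ₀ π s * dtv (π' s) (π s)
        = (1 - γ) * ∑' t : ℕ, γ ^ t * ∑ s, occ P ρ₀ π t s * dtv (π' s) (π s) :=
      dvisit_dot hP hπ hρ hγ0 hγ1 _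
    have hT : ∑' k : ℕ, γ ^ k * epst P ρ₀ π π' k
        = 2 * ∑' t : ℕ, γ ^ t * ∑ s, occ P ρ₀ π t s * dtv (π' s) (π s) := by
      rw [← tsum_mul_left]
      exact tsum_congr fun t => by rw [hdtv_eps t]; ring
    have hTle : ∑' t : ℕ, γ ^ t * ∑ s, occ P ρ₀ π t s * dtv (π' s) (π s) ≤ δ / (1 - γ) := by
      rw [le_div_iff₀ h1γ]
      have := hδ
      rw [hdtvsum] at this
      linarith
    rw [hT]
    calc 2 * ∑' t : ℕ, γ ^ t * ∑ s, occ P ρ₀ π t s * dtv (π' s) (π s)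
        ≤ 2 * (δ / (1 - γ)) := by linarith
      _ = 2 * δ / (1 - γ) := by ring
  -- summability of the occupancy-weighted advantage series
  have hsumocc : Summable fun t : ℕ => γ ^ t * ∑ s, occ P ρ₀ π t s *
      ∑ a, π' s a * Adv P r γ π s a :=
    summable_occ_dot hP hπ hρ hγ0 hγ1 _
  have hsumocc' : Summable fun t : ℕ => γ ^ t * ∑ s, occ P ρ₀ π' t s *
      ∑ a, π' s a * Adv P r γ π s a :=
    summable_occ_dot hP hπ' hρ hγ0 hγ1 _
  -- express the surrogate error as a single series
  have hL : (1 / (1 - γ)) * ∑ s, dvisit P γ ρ₀ π s * ∑ a, π' s a * Adv P r γ π s a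
      = ∑' t : ℕ, γ ^ t * ∑ s, occ P ρ₀ π t s * ∑ a, π' s a * Adv P r γ π s a := by
    rw [dvisit_dot hP hπ hρ hγ0 hγ1 (fun s => ∑ a, π' s a * Adv P r γ π s a)]
    field_simp
  have hp := pdl hP hπ hπ' hρ hγ0 hγ1 r
  have hdiff : Jval P r γ ρ₀ π' -
      (Jval P r γ ρ₀ π +
        (1 / (1 - γ)) * ∑ s, dvisit P γ ρ₀ π s * ∑ a, π' s a * Adv P r γ π s a)
      = ∑' t : ℕ, (γ ^ t * ∑ s, occ P ρ₀ π' t s * ∑ a, π' s a * Adv P r γ π s a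
          - γ ^ t * ∑ s, occ P ρ₀ π t s * ∑ a, π' s a * Adv P r γ π s a) := by
    rw [Summable.tsum_sub hsumocc' hsumocc, ← hp, ← hL]
    ring
  rw [hdiff]
  -- termwise bound
  have hterm : ∀ t, |γ ^ t * ∑ s, occ P ρ₀ π' t s * ∑ a, π' s a * Adv P r γ π s a
      - γ ^ t * ∑ s, occ P ρ₀ π t s * ∑ a, π' s a * Adv P r γ π s a|
      ≤ Amax * (γ ^ t * ∑ k ∈ Finset.range t, epst P ρ₀ π π' k) := by
    intro t
    have h1 : γ ^ t * ∑ s, occ P ρ₀ π' t s * ∑ a, π' s a * Adv P r γ π s a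
        - γ ^ t * ∑ s, occ P ρ₀ π t s * ∑ a, π' s a * Adv P r γ π s a
        = γ ^ t * ∑ s, (occ P ρ₀ π' t s - occ P ρ₀ π t s)
            * ∑ a, π' s a * Adv P r γ π s a := by
      rw [← mul_sub, ← Finset.sum_sub_distrib]
      congr 1
      exact Finset.sum_congr rfl fun s _ => by ring
    rw [h1, abs_mul, abs_of_nonneg (pow_nonneg hγ0 t)]
    have h2 : |∑ s, (occ P ρ₀ π' t s - occ P ρ₀ π t s) * ∑ a, π' s a * Adv P r γ π s a|
        ≤ Amax * eL1 P ρ₀ π π' t := by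
      calc |∑ s, (occ P ρ₀ π' t s - occ P ρ₀ π t s) * ∑ a, π' s a * Adv P r γ π s a|
          ≤ ∑ s, |(occ P ρ₀ π' t s - occ P ρ₀ π t s) * ∑ a, π' s a * Adv P r γ π s a| :=
            Finset.abs_sum_le_sum_abs _ _
        _ ≤ ∑ s, |occ P ρ₀ π' t s - occ P ρ₀ π t s| * Amax := by
            refine Finset.sum_le_sum fun s _ => ?_
            rw [abs_mul]
            exact mul_le_mul_of_nonneg_left (hwle s) (abs_nonneg _)
        _ = Amax * eL1 P ρ₀ π π' t := by rw [← Finset.sum_mul]; unfold eL1; ring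
    calc γ ^ t * |∑ s, (occ P ρ₀ π' t s - occ P ρ₀ π t s) * ∑ a, π' s a * Adv P r γ π s a|
        ≤ γ ^ t * (Amax * eL1 P ρ₀ π π' t) :=
          mul_le_mul_of_nonneg_left h2 (pow_nonneg hγ0 t)
      _ ≤ γ ^ t * (Amax * ∑ k ∈ Finset.range t, epst P ρ₀ π π' k) :=
          mul_le_mul_of_nonneg_left
            (mul_le_mul_of_nonneg_left (eL1_le_sum hP hπ hπ' hρ t) hAmax)
            (pow_nonneg hγ0 t)
      _ = Amax * (γ ^ t * ∑ k ∈ Finset.range t, epst P ρ₀ π π' k) := by ring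
  have hvs : Summable fun t : ℕ => Amax * (γ ^ t * ∑ k ∈ Finset.range t, epst P ρ₀ π π' k) :=
    (summable_geo_range_sum hγ0 hγ1 hε0 hε2).mul_left Amax
  refine (abs_tsum_le_tsum' hterm hvs).trans ?_
  rw [tsum_mul_left, tsum_geo_range_sum hγ0 hγ1 hε0 hε2]
  have hγdiv : 0 ≤ γ / (1 - γ) := div_nonneg hγ0 h1γ.le
  calc Amax * (γ / (1 - γ) * ∑' k : ℕ, γ ^ k * epst P ρ₀ π π' k)
      ≤ Amax * (γ / (1 - γ) * (2 * δ / (1 - γ))) :=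
        mul_le_mul_of_nonneg_left (mul_le_mul_of_nonneg_left hkey hγdiv) hAmax
    _ = 2 * γ / (1 - γ) ^ 2 * Amax * δ := by
        field_simp
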